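/- arXiv:1611.08490 — 4 statements merged into one kernel-verified Lean document; each statement's English description precedes it below -/
import Mathlib

section
/- The ring A_r is a Banach ring: for all f, g ∈ A_r, the product fg (computed in ℂ((t))) again lies in A_r and satisfies ‖fg‖_{hyb,r} ≤ ‖f‖_{hyb,r} · ‖g‖_{hyb,r}; moreover A_r is complete with respect to the metric d(f,g) = ‖f − g‖_{hyb,r}. -/
/-- The hybrid norm on `ℂ`: `|c|_hyb = max {1, |c|}` for `c ≠ 0`, and `|0|_hyb = 0`. -/
noncomputable def hybNorm (c : ℂ) : ℝ := if c = 0 then 0 else max 1 ‖c‖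

/-- The ring `A_r` of formal Laurent series `f = ∑ aₙ tⁿ` with
`∑ |aₙ|_hyb rⁿ < ∞`, viewed as a subset of `ℂ((t))`. -/
def Ar (r : ℝ) : Set (LaurentSeries ℂ) :=
  {f | Summable fun n : ℤ => hybNorm (f.coeff n) * r ^ n}

/-- The hybrid norm `‖f‖_{hyb,r} = ∑ |aₙ|_hyb rⁿ` of a Laurent series. -/
noncomputable def hybnorm (r : ℝ) (f : LaurentSeries ℂ) : ℝ :=
  ∑' n : ℤ, hybNorm (f.coeff n) * r ^ n

@[simp] lemma hybNorm_zero : hybNorm 0 = 0 := if_pos rfl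

lemma hybNorm_nonneg (c : ℂ) : 0 ≤ hybNorm c := by
  unfold hybNorm
  split
  · exact le_refl 0
  · exact le_trans zero_le_one (le_max_left _ _)

lemma one_le_hybNorm {c : ℂ} (hc : c ≠ 0) : 1 ≤ hybNorm c := by
  unfold hybNorm
  rw [if_neg hc]
  exact le_max_left _ _

lemma eq_zero_of_hybNorm_lt_one {c : ℂ} (h : hybNorm c < 1) : c = 0 := by
  by_contra hc
  exact absurd (one_le_hybNorm hc) (not_le.2 h)

lemma hybNorm_neg (c : ℂ) : hybNorm (-c) = hybNorm c := by
  unfold hybNorm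
  simp [neg_eq_zero]

lemma hybNorm_add_le (a b : ℂ) : hybNorm (a + b) ≤ hybNorm a + hybNorm b := by
  by_cases ha : a = 0
  · simp [ha, hybNorm_nonneg]
  by_cases hb : b = 0
  · simp [hb, hybNorm_nonneg]
  by_cases hab : a + b = 0
  · rw [hab, hybNorm_zero]
    exact add_nonneg (hybNorm_nonneg a) (hybNorm_nonneg b)
  unfold hybNorm
  rw [if_neg ha, if_neg hb, if_neg hab]
  refine max_le ?_ ?_
  · calc (1 : ℝ) ≤ 1 + 1 := by norm_num
      _ ≤ _ := add_le_add (le_max_left _ _) (le_max_left _ _)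
  · calc ‖a + b‖ ≤ ‖a‖ + ‖b‖ := norm_add_le a b
      _ ≤ _ := add_le_add (le_max_right _ _) (le_max_right _ _)

lemma hybNorm_sub_le (a b : ℂ) : hybNorm (a - b) ≤ hybNorm a + hybNorm b := by
  rw [sub_eq_add_neg]
  simpa [hybNorm_neg] using hybNorm_add_le a (-b)

lemma hybNorm_mul_le (a b : ℂ) : hybNorm (a * b) ≤ hybNorm a * hybNorm b := by
  by_cases ha : a = 0
  · simp [ha]
  by_cases hb : b = 0
  · simp [hb]
  have hab : a * b ≠ 0 := mul_ne_zero ha hb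
  unfold hybNorm
  rw [if_neg ha, if_neg hb, if_neg hab]
  have h1 : (0:ℝ) ≤ max 1 ‖a‖ := le_trans zero_le_one (le_max_left _ _)
  refine max_le ?_ ?_
  · calc (1 : ℝ) = 1 * 1 := (one_mul 1).symm
      _ ≤ _ := mul_le_mul (le_max_left _ _) (le_max_left _ _) zero_le_one h1
  · rw [norm_mul]
    exact mul_le_mul (le_max_right _ _) (le_max_right _ _) (norm_nonneg b) h1

lemma hybNorm_sum_le {ι : Type*} (s : Finset ι) (f : ι → ℂ) :
    hybNorm (∑ i ∈ s, f i) ≤ ∑ i ∈ s, hybNorm (f i) := by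
  classical
  induction s using Finset.cons_induction with
  | empty => simp
  | cons a s ha ih =>
    rw [Finset.sum_cons, Finset.sum_cons]
    exact le_trans (hybNorm_add_le _ _) (add_le_add le_rfl ih)

lemma term_nonneg {r : ℝ} (hr0 : 0 < r) (f : LaurentSeries ℂ) (n : ℤ) :
    0 ≤ hybNorm (f.coeff n) * r ^ n :=
  mul_nonneg (hybNorm_nonneg _) (zpow_pos hr0 n).le

lemma Ar.sub {r : ℝ} (hr0 : 0 < r) {f g : LaurentSeries ℂ} (hf : f ∈ Ar r) (hg : g ∈ Ar r) :
    f - g ∈ Ar r := by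
  refine Summable.of_nonneg_of_le (fun n => term_nonneg hr0 _ n) (fun n => ?_) (hf.add hg)
  rw [HahnSeries.coeff_sub, ← add_mul]
  exact mul_le_mul_of_nonneg_right (hybNorm_sub_le _ _) (zpow_pos hr0 n).le

lemma coeff_le_hybnorm {r : ℝ} (hr0 : 0 < r) {f : LaurentSeries ℂ} (hf : f ∈ Ar r) (n : ℤ) :
    hybNorm (f.coeff n) * r ^ n ≤ hybnorm r f := by
  have hf' : Summable fun n : ℤ => hybNorm (f.coeff n) * r ^ n := hf
  unfold hybnorm
  exact Summable.le_tsum hf' n (fun j _ => term_nonneg hr0 f j)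

set_option maxHeartbeats 1000000 in
lemma mul_mem_and_le {r : ℝ} (hr0 : 0 < r) {f g : LaurentSeries ℂ}
    (hf : f ∈ Ar r) (hg : g ∈ Ar r) :
    f * g ∈ Ar r ∧ hybnorm r (f * g) ≤ hybnorm r f * hybnorm r g := by
  classical
  set H : ℤ × ℤ → ℝ := fun p =>
    (hybNorm (f.coeff p.1) * r ^ p.1) * (hybNorm (g.coeff p.2) * r ^ p.2) with hH
  have hHnn : ∀ p, 0 ≤ H p := fun p =>
    mul_nonneg (term_nonneg hr0 f p.1) (term_nonneg hr0 g p.2)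
  have hHsum : Summable H :=
    Summable.mul_of_nonneg hf hg (fun n => term_nonneg hr0 f n) (fun n => term_nonneg hr0 g n)
  set A : ℤ → Finset (ℤ × ℤ) := fun n =>
    Finset.antidiagonal f.isPWO_support g.isPWO_support n with hA
  have key : ∀ n : ℤ, hybNorm ((f * g).coeff n) * r ^ n ≤ ∑ p ∈ A n, H p := by
    intro n
    rw [HahnSeries.coeff_mul]
    have h1 : hybNorm (∑ ij ∈ A n, f.coeff ij.1 * g.coeff ij.2) * r ^ n
        ≤ (∑ ij ∈ A n, hybNorm (f.coeff ij.1 * g.coeff ij.2)) * r ^ n :=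
      mul_le_mul_of_nonneg_right (hybNorm_sum_le _ _) (zpow_pos hr0 n).le
    refine le_trans h1 ?_
    rw [Finset.sum_mul]
    refine Finset.sum_le_sum (fun p hp => ?_)
    rw [Finset.mem_addAntidiagonal] at hp
    have hpn : r ^ n = r ^ p.1 * r ^ p.2 := by rw [← zpow_add₀ hr0.ne' p.1 p.2, hp.2.2]
    rw [hpn, hH]
    dsimp only
    rw [mul_mul_mul_comm (hybNorm (f.coeff p.1)) (r ^ p.1)]
    exact mul_le_mul_of_nonneg_right (hybNorm_mul_le _ _)
      (mul_nonneg (zpow_pos hr0 _).le (zpow_pos hr0 _).le)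
  have hdisj : ∀ S : Finset ℤ, (S : Set ℤ).PairwiseDisjoint A := by
    intro S m _ n _ hmn
    refine Finset.disjoint_left.2 (fun p hpm hpn => hmn ?_)
    rw [hA] at hpm hpn
    simp only [Finset.mem_addAntidiagonal] at hpm hpn
    rw [← hpm.2.2, hpn.2.2]
  have bound : ∀ S : Finset ℤ, ∑ n ∈ S, hybNorm ((f * g).coeff n) * r ^ n ≤ ∑' p, H p := by
    intro S
    calc ∑ n ∈ S, hybNorm ((f * g).coeff n) * r ^ n
        ≤ ∑ n ∈ S, ∑ p ∈ A n, H p := Finset.sum_le_sum (fun n _ => key n)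
      _ = ∑ p ∈ S.biUnion A, H p := (Finset.sum_biUnion (hdisj S)).symm
      _ ≤ ∑' p, H p := Summable.sum_le_tsum _ (fun p _ => hHnn p) hHsum
  have hmem : f * g ∈ Ar r :=
    summable_of_sum_le (fun n => term_nonneg hr0 (f * g) n) bound
  refine ⟨hmem, ?_⟩
  have h2 : hybnorm r (f * g) ≤ ∑' p, H p := Summable.tsum_le_of_sum_le hmem bound
  refine le_trans h2 (le_of_eq ?_)
  have hfn : Summable (fun n : ℤ => ‖hybNorm (f.coeff n) * r ^ n‖) :=
    hf.congr (fun n => (Real.norm_of_nonneg (term_nonneg hr0 f n)).symm)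
  have hgn : Summable (fun n : ℤ => ‖hybNorm (g.coeff n) * r ^ n‖) :=
    hg.congr (fun n => (Real.norm_of_nonneg (term_nonneg hr0 g n)).symm)
  exact (tsum_mul_tsum_of_summable_norm hfn hgn).symm

/-- `A_r` is a Banach ring: it is stable under multiplication in `ℂ((t))`,
the hybrid norm is submultiplicative, and `A_r` is complete for the distance
`d(f,g) = ‖f - g‖_{hyb,r}`. -/
theorem Ar_is_banach_ring (r : ℝ) (hr0 : 0 < r) (hr1 : r < 1) :
    (∀ f ∈ Ar r, ∀ g ∈ Ar r,
      f * g ∈ Ar r ∧ hybnorm r (f * g) ≤ hybnorm r f * hybnorm r g) ∧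
    (∀ F : ℕ → LaurentSeries ℂ, (∀ n, F n ∈ Ar r) →
      (∀ ε : ℝ, 0 < ε → ∃ N : ℕ, ∀ m, N ≤ m → ∀ n, N ≤ n → hybnorm r (F m - F n) < ε) →
      ∃ L ∈ Ar r,
        Filter.Tendsto (fun n => hybnorm r (F n - L)) Filter.atTop (nhds 0)) := by
  constructor
  · intro f hf g hg
    exact mul_mem_and_le hr0 hf hg
  · intro F hF hC
    have hsub : ∀ m k : ℕ, F m - F k ∈ Ar r := fun m k => Ar.sub hr0 (hF m) (hF k)
    -- coefficientwise eventual stabilization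
    have stab : ∀ n : ℤ, ∃ N : ℕ, ∀ m, N ≤ m → ∀ k, N ≤ k → (F m).coeff n = (F k).coeff n := by
      intro n
      obtain ⟨N, hN⟩ := hC (r ^ n) (zpow_pos hr0 n)
      refine ⟨N, fun m hm k hk => ?_⟩
      have h1 : hybNorm ((F m - F k).coeff n) * r ^ n ≤ hybnorm r (F m - F k) :=
        coeff_le_hybnorm hr0 (hsub m k) n
      have hrn : (0:ℝ) < r ^ n := zpow_pos hr0 n
      have h2 : hybNorm ((F m - F k).coeff n) * r ^ n < r ^ n :=
        lt_of_le_of_lt h1 (hN m hm k hk)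
      have h3 : hybNorm ((F m - F k).coeff n) < 1 := by
        nlinarith [hybNorm_nonneg ((F m - F k).coeff n)]
      have := eq_zero_of_hybNorm_lt_one h3
      rwa [HahnSeries.coeff_sub, sub_eq_zero] at this
    choose M hM using stab
    set Lc : ℤ → ℂ := fun n => (F (M n)).coeff n with hLcdef
    have hLc : ∀ n : ℤ, ∀ m, M n ≤ m → (F m).coeff n = Lc n :=
      fun n m hm => hM n m hm (M n) le_rfl
    -- negative coefficients are eventually those of F N0
    obtain ⟨N0, hN0⟩ := hC 1 one_pos
    have hneg : ∀ n : ℤ, n < 0 → Lc n = (F N0).coeff n := by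
      intro n hn
      set m : ℕ := max (M n) N0 with hmdef
      have h1 : (F m).coeff n = Lc n := hLc n m (le_max_left _ _)
      have h2 : hybNorm ((F m - F N0).coeff n) * r ^ n ≤ hybnorm r (F m - F N0) :=
        coeff_le_hybnorm hr0 (hsub m N0) n
      have h3 : hybNorm ((F m - F N0).coeff n) * r ^ n < 1 :=
        lt_of_le_of_lt h2 (hN0 m (le_max_right _ _) N0 le_rfl)
      have hrn : (0:ℝ) < r ^ n := zpow_pos hr0 n
      have h4 : hybNorm ((F m - F N0).coeff n) < r ^ (-n) := by
        have he : hybNorm ((F m - F N0).coeff n)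
            = hybNorm ((F m - F N0).coeff n) * r ^ n * r ^ (-n) := by
          rw [mul_assoc, ← zpow_add₀ hr0.ne', add_neg_cancel, zpow_zero, mul_one]
        rw [he]
        calc hybNorm ((F m - F N0).coeff n) * r ^ n * r ^ (-n)
            < 1 * r ^ (-n) := by
              exact mul_lt_mul_of_pos_right h3 (zpow_pos hr0 (-n))
          _ = r ^ (-n) := one_mul _
      have h5 : r ^ (-n) ≤ 1 := by
        have hnn : (0:ℤ) ≤ -n := by omega
        rw [show (-n : ℤ) = ((-n).toNat : ℤ) by omega, zpow_natCast]
        exact pow_le_one₀ hr0.le hr1.le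
      have h6 := eq_zero_of_hybNorm_lt_one (lt_of_lt_of_le h4 h5)
      rw [HahnSeries.coeff_sub, sub_eq_zero] at h6
      rw [← h1, h6]
    -- the limit Laurent series
    have hsupp : (Function.support Lc).IsPWO := by
      have hss : Function.support Lc ⊆ (F N0).support ∪ Set.Ici (0 : ℤ) := by
        intro n hn
        by_cases h : 0 ≤ n
        · exact Or.inr h
        · push_neg at h
          left
          have h1 := hneg n h
          rw [Function.mem_support] at hn
          rw [h1] at hn
          exact hn
      refine Set.IsPWO.mono (((F N0).isPWO_support).union ?_) hss
      have hbdd : BddBelow (Set.Ici (0 : ℤ)) := ⟨0, fun x hx => hx⟩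
      have hwf : Set.IsWF (Set.Ici (0:ℤ)) := hbdd.wellFoundedOn_lt
      exact hwf.isPWO
    set L : LaurentSeries ℂ := ⟨Lc, hsupp⟩ with hLdef
    have hLcoeff : ∀ n, L.coeff n = Lc n := fun n => rfl
    -- tail estimate
    have tail : ∀ ε : ℝ, 0 < ε → ∃ N : ℕ, ∀ m, N ≤ m →
        Summable (fun n : ℤ => hybNorm ((F m - L).coeff n) * r ^ n) ∧
        hybnorm r (F m - L) ≤ ε := by
      intro ε hε
      obtain ⟨N, hN⟩ := hC ε hε
      refine ⟨N, fun m hm => ?_⟩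
      have bound : ∀ S : Finset ℤ, ∑ n ∈ S, hybNorm ((F m - L).coeff n) * r ^ n ≤ ε := by
        intro S
        set k : ℕ := max N (S.sup M) with hkdef
        have hagree : ∀ n ∈ S, (F m - L).coeff n = (F m - F k).coeff n := by
          intro n hn
          rw [HahnSeries.coeff_sub, HahnSeries.coeff_sub, hLcoeff]
          rw [hLc n k (le_trans (Finset.le_sup hn) (le_max_right _ _))]
        calc ∑ n ∈ S, hybNorm ((F m - L).coeff n) * r ^ n
            = ∑ n ∈ S, hybNorm ((F m - F k).coeff n) * r ^ n :=
              Finset.sum_congr rfl (fun n hn => by rw [hagree n hn])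
          _ ≤ hybnorm r (F m - F k) :=
              Summable.sum_le_tsum S (fun n _ => term_nonneg hr0 _ n) (hsub m k)
          _ ≤ ε := (hN m hm k (le_max_left _ _)).le
      have hsummable : Summable (fun n : ℤ => hybNorm ((F m - L).coeff n) * r ^ n) :=
        summable_of_sum_le (fun n => term_nonneg hr0 (F m - L) n) bound
      exact ⟨hsummable, Summable.tsum_le_of_sum_le hsummable bound⟩
    -- L ∈ Ar r
    obtain ⟨N1, hN1⟩ := tail 1 one_pos
    have hdiff : Summable (fun n : ℤ => hybNorm ((F N1 - L).coeff n) * r ^ n) :=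
      (hN1 N1 le_rfl).1
    have hL : L ∈ Ar r := by
      refine Summable.of_nonneg_of_le (fun n => term_nonneg hr0 L n)
        (fun n => ?_) ((hF N1).add hdiff)
      have he : L.coeff n = (F N1).coeff n - (F N1 - L).coeff n := by
        rw [HahnSeries.coeff_sub]; ring
      rw [he, ← add_mul]
      exact mul_le_mul_of_nonneg_right (hybNorm_sub_le _ _) (zpow_pos hr0 n).le
    refine ⟨L, hL, ?_⟩
    rw [Metric.tendsto_atTop]
    intro ε hε
    obtain ⟨N, hN⟩ := tail (ε / 2) (half_pos hε)
    refine ⟨N, fun m hm => ?_⟩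
    rw [Real.dist_eq, sub_zero, abs_of_nonneg]
    · exact lt_of_le_of_lt (hN m hm).2 (half_lt_self hε)
    · exact tsum_nonneg (fun n => term_nonneg hr0 (F m - L) n)
end

section
/- Let N be a multiplicative seminorm on the field ℂ such that N(c) ≤ max{1, |c|} for all c ∈ ℂ. Then either N(c) = 1 for all c ∈ ℂ ∖ {0} (N is the trivial norm), or there exists ε ∈ (0, 1] such that N(c) = |c|^ε for all c ∈ ℂ. -/
/-- A multiplicative seminorm on a commutative unital ring: a nonnegative function with
`N 0 = 0`, `N 1 = 1`, `N (fg) = N f · N g` and `N (f+g) ≤ N f + N g`. -/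
def IsMultSeminorm {A : Type*} [CommRing A] (N : A → ℝ) : Prop :=
  (∀ a : A, 0 ≤ N a) ∧ N 0 = 0 ∧ N 1 = 1 ∧
    (∀ a b : A, N (a * b) = N a * N b) ∧ (∀ a b : A, N (a + b) ≤ N a + N b)

theorem additive_monotone_linear (g : ℝ → ℝ) (hadd : ∀ x y, g (x + y) = g x + g y)
    (hmono : Monotone g) : ∀ x, g x = g 1 * x := by
  set G : ℝ →+ ℝ := AddMonoidHom.mk' g hadd with hG
  have hq : ∀ q : ℚ, g (q : ℝ) = g 1 * q := by
    intro q
    have := map_rat_smul G q (1 : ℝ)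
    simpa [hG, AddMonoidHom.mk'_apply, Rat.smul_def, mul_comm] using this
  have h0 : g 0 = 0 := by simpa using hq 0
  have h1 : 0 ≤ g 1 := by
    have := hmono (show (0:ℝ) ≤ 1 by norm_num)
    linarith
  intro x
  rcases eq_or_lt_of_le h1 with h | h
  · obtain ⟨q, hq1, hq2⟩ := exists_rat_btwn (show x - 1 < x by linarith)
    obtain ⟨r, hr1, hr2⟩ := exists_rat_btwn (show x < x + 1 by linarith)
    have hl := hmono hq2.le
    have hu := hmono hr1.le
    rw [hq q] at hl; rw [hq r] at hu
    rw [← h] at hl hu ⊢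
    simp at hl hu ⊢
    linarith
  · refine le_antisymm ?_ ?_
    · by_contra hc
      push_neg at hc
      have hx : x < g x / g 1 := by rw [lt_div_iff₀ h]; linarith [mul_comm (g x) (g 1)]
      obtain ⟨q, hq1, hq2⟩ := exists_rat_btwn hx
      have h3 := hmono hq1.le
      rw [hq q] at h3
      have h4 : (q : ℝ) * g 1 < g x := (lt_div_iff₀ h).mp hq2
      linarith [mul_comm (g 1) ((q:ℝ))]
    · by_contra hc
      push_neg at hc
      have hx : g x / g 1 < x := by rw [div_lt_iff₀ h]; linarith [mul_comm (g x) (g 1)]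
      obtain ⟨q, hq1, hq2⟩ := exists_rat_btwn hx
      have h3 := hmono hq2.le
      rw [hq q] at h3
      have h4 : g x < (q : ℝ) * g 1 := (div_lt_iff₀ h).mp hq1
      linarith [mul_comm (g 1) ((q:ℝ))]

/-- A multiplicative seminorm on `ℂ` bounded by the hybrid norm
`max {1, |·|}` is either the trivial norm or `|·|^ε` for some `ε ∈ (0,1]`. -/
theorem seminorm_on_C_classification (N : ℂ → ℝ) (hN : IsMultSeminorm N)
    (hbd : ∀ c : ℂ, N c ≤ max 1 ‖c‖) :
    (∀ c : ℂ, c ≠ 0 → N c = 1) ∨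
      ∃ ε : ℝ, 0 < ε ∧ ε ≤ 1 ∧ ∀ c : ℂ, N c = ‖c‖ ^ ε := by
  obtain ⟨hnn, h0, h1, hmul, _⟩ := hN
  have hpos : ∀ c : ℂ, c ≠ 0 → 0 < N c := by
    intro c hc
    rcases (hnn c).lt_or_eq with h | h
    · exact h
    · exfalso
      have := hmul c c⁻¹
      rw [mul_inv_cancel₀ hc, h1, ← h] at this
      simp at this
  have hle1 : ∀ c : ℂ, ‖c‖ ≤ 1 → N c ≤ 1 :=
    fun c h => (hbd c).trans_eq (max_eq_left h)
  have hunit : ∀ c : ℂ, ‖c‖ = 1 → N c = 1 := by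
    intro c h
    have hc : c ≠ 0 := by
      intro h'; rw [h'] at h; simp at h
    have ha : N c ≤ 1 := hle1 c h.le
    have hb : N c⁻¹ ≤ 1 := hle1 c⁻¹ (by rw [norm_inv, h]; norm_num)
    have hm := hmul c c⁻¹
    rw [mul_inv_cancel₀ hc, h1] at hm
    nlinarith [hpos c hc, hpos c⁻¹ (inv_ne_zero hc)]
  have habs : ∀ c : ℂ, c ≠ 0 → N c = N ((‖c‖ : ℝ) : ℂ) := by
    intro c hc
    have hac : ‖c‖ ≠ 0 := by simpa using hc
    have hcc : c = ((‖c‖ : ℝ) : ℂ) * (((‖c‖ : ℝ) : ℂ)⁻¹ * c) := by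
      rw [← mul_assoc, mul_inv_cancel₀ (by exact_mod_cast hac), one_mul]
    have hu : ‖((‖c‖ : ℝ) : ℂ)⁻¹ * c‖ = 1 := by
      rw [norm_mul, norm_inv, Complex.norm_real, Real.norm_eq_abs, abs_of_nonneg (norm_nonneg c)]
      field_simp
    calc N c = N (((‖c‖ : ℝ) : ℂ) * (((‖c‖ : ℝ) : ℂ)⁻¹ * c)) := by
              rw [← hcc]
      _ = N ((‖c‖ : ℝ) : ℂ) * N (((‖c‖ : ℝ) : ℂ)⁻¹ * c) := hmul _ _
      _ = N ((‖c‖ : ℝ) : ℂ) := by rw [hunit _ hu, mul_one]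
  have hmono : ∀ s t : ℝ, 0 < s → s ≤ t → N ((s : ℝ) : ℂ) ≤ N ((t : ℝ) : ℂ) := by
    intro s t hs hst
    have ht : (0:ℝ) < t := hs.trans_le hst
    have hst' : ((s : ℝ) : ℂ) = ((t : ℝ) : ℂ) * (((s / t : ℝ) : ℝ) : ℂ) := by
      have : ((t : ℝ) : ℂ) ≠ 0 := Complex.ofReal_ne_zero.mpr ht.ne'
      push_cast
      field_simp
    rw [hst', hmul]
    have hq : N (((s / t : ℝ) : ℝ) : ℂ) ≤ 1 := by
      apply hle1
      rw [Complex.norm_real, Real.norm_eq_abs, abs_of_nonneg (by positivity)]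
      exact div_le_one_of_le₀ hst ht.le
    nlinarith [hnn ((t : ℝ) : ℂ), hnn (((s / t : ℝ) : ℝ) : ℂ)]
  set g : ℝ → ℝ := fun x => Real.log (N ((Real.exp x : ℝ) : ℂ)) with hg
  have hexpos : ∀ x : ℝ, 0 < N ((Real.exp x : ℝ) : ℂ) := by
    intro x
    apply hpos
    exact_mod_cast Complex.ofReal_ne_zero.mpr (Real.exp_pos x).ne'
  have gadd : ∀ x y, g (x + y) = g x + g y := by
    intro x y
    simp only [hg]
    rw [Real.exp_add, Complex.ofReal_mul, hmul,
      Real.log_mul (hexpos x).ne' (hexpos y).ne']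
  have gmono : Monotone g := by
    intro x y hxy
    exact Real.log_le_log (hexpos x)
      (hmono _ _ (Real.exp_pos x) (Real.exp_le_exp.mpr hxy))
  have glin := additive_monotone_linear g gadd gmono
  set ε : ℝ := g 1 with hε
  have hε0 : 0 ≤ ε := by
    have hg0 : g 0 = 0 := by
      simp only [hg, Real.exp_zero]
      rw [show ((1 : ℝ) : ℂ) = (1 : ℂ) by norm_num, h1, Real.log_one]
    have := gmono (zero_le_one (α := ℝ))
    rw [hg0] at this
    exact this
  have hε1 : ε ≤ 1 := by
    have hb := hbd ((Real.exp 1 : ℝ) : ℂ)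
    rw [Complex.norm_real, Real.norm_eq_abs, abs_of_pos (Real.exp_pos 1),
      max_eq_right (by linarith [Real.add_one_le_exp (1:ℝ)])] at hb
    have : g 1 ≤ Real.log (Real.exp 1) :=
      Real.log_le_log (hexpos 1) hb
    rwa [Real.log_exp] at this
  have key : ∀ t : ℝ, 0 < t → N ((t : ℝ) : ℂ) = t ^ ε := by
    intro t ht
    have h2 : N ((t : ℝ) : ℂ) = Real.exp (g (Real.log t)) := by
      simp only [hg, Real.exp_log ht]
      rw [Real.exp_log (hpos _ (by exact_mod_cast Complex.ofReal_ne_zero.mpr ht.ne'))]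
    rw [h2, glin, Real.rpow_def_of_pos ht, mul_comm]
  have keyc : ∀ c : ℂ, c ≠ 0 → N c = ‖c‖ ^ ε := by
    intro c hc
    rw [habs c hc, key _ (norm_pos_iff.mpr hc)]
  rcases eq_or_lt_of_le hε0 with h | h
  · left
    intro c hc
    rw [keyc c hc, ← h, Real.rpow_zero]
  · right
    refine ⟨ε, h, hε1, fun c => ?_⟩
    rcases eq_or_ne c 0 with rfl | hc
    · simp [h0, Real.zero_rpow h.ne']
    · exact keyc c hc
end

section
/- Fix ε ∈ (0, 1]. Let N be a multiplicative seminorm on the polynomial ring ℂ[X] such that N(c) = |c|^ε for every constant polynomial c ∈ ℂ. Then there exists z ∈ ℂ such that N(P) = |P(z)|^ε for all P ∈ ℂ[X]. -/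
open Polynomial

/-- (Gelfand–Mazur-type) A multiplicative seminorm on `ℂ[X]` restricting to
`|·|^ε` on the constants is given by evaluation at some point `z ∈ ℂ`. -/
theorem seminorm_on_polynomials_is_evaluation (ε : ℝ) (hε0 : 0 < ε) (hε1 : ε ≤ 1)
    (N : Polynomial ℂ → ℝ) (hN : IsMultSeminorm N)
    (hC : ∀ c : ℂ, N (Polynomial.C c) = ‖c‖ ^ ε) :
    ∃ z : ℂ, ∀ P : Polynomial ℂ, N P = ‖P.eval z‖ ^ ε := by
  obtain ⟨hpos, h0, h1, hmul, hadd⟩ := hN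
  -- N of a negation
  have hNneg : ∀ p : ℂ[X], N (-p) = N p := by
    intro p
    have hn1 : N (-1 : ℂ[X]) = 1 := by
      have e : (-1 : ℂ[X]) = C (-1) := by simp
      rw [e, hC]; simp
    rw [← neg_one_mul, hmul, hn1, one_mul]
  set f : ℂ → ℝ := fun z => N (X - C z) with hfdef
  -- Hölder-type bound
  have hfd : ∀ z w : ℂ, f z - f w ≤ ‖z - w‖ ^ ε := by
    intro z w
    have e : (X - C z : ℂ[X]) = (X - C w) + C (w - z) := by rw [map_sub]; ring
    have h2 : f z ≤ f w + N (C (w - z)) := by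
      calc f z = N ((X - C w) + C (w - z)) := by rw [hfdef]; rw [← e]
        _ ≤ f w + N (C (w - z)) := hadd _ _
    have h3 : ‖w - z‖ = ‖z - w‖ := norm_sub_rev w z
    rw [hC, h3] at h2
    linarith
  have habs : ∀ z w : ℂ, |f z - f w| ≤ ‖z - w‖ ^ ε := by
    intro z w
    rw [abs_sub_le_iff]
    refine ⟨hfd z w, ?_⟩
    have := hfd w z
    rwa [norm_sub_rev w z] at this
  have hcont : Continuous f := by
    rw [Metric.continuous_iff]
    intro w e he
    refine ⟨e ^ ε⁻¹, Real.rpow_pos_of_pos he _, fun z hz => ?_⟩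
    have h1' : ‖z - w‖ ^ ε < (e ^ ε⁻¹) ^ ε :=
      Real.rpow_lt_rpow (norm_nonneg _) (by rwa [Complex.dist_eq] at hz) hε0
    have h2 : (e ^ ε⁻¹ : ℝ) ^ ε = e := by
      rw [← Real.rpow_mul he.le, inv_mul_cancel₀ hε0.ne', Real.rpow_one]
    rw [Real.dist_eq]
    calc |f z - f w| ≤ ‖z - w‖ ^ ε := habs z w
      _ < e := h2 ▸ h1'
  -- lower bound / coercivity
  have hlow : ∀ z : ℂ, ‖z‖ ^ ε - N X ≤ f z := by
    intro z
    have e : (C z : ℂ[X]) = X + (-(X - C z)) := by ring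
    have h2 : N (C z) ≤ N X + f z := by
      calc N (C z) = N (X + (-(X - C z))) := by rw [← e]
        _ ≤ N X + N (-(X - C z)) := hadd _ _
        _ = N X + f z := by rw [hNneg]
    rw [hC] at h2; linarith
  -- existence of a global minimum
  have hB : (0:ℝ) < N X + f 0 + 1 := by
    have := hpos X; have := hpos (X - C 0); simp only [hfdef]; linarith
  set R : ℝ := (N X + f 0 + 1) ^ ε⁻¹ with hR
  have hRpos : 0 < R := Real.rpow_pos_of_pos hB _
  obtain ⟨z₀, hz₀K, hminK⟩ := (isCompact_closedBall (0:ℂ) R).exists_isMinOn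
      ⟨0, Metric.mem_closedBall_self hRpos.le⟩ hcont.continuousOn
  have hz₀ : ∀ z, f z₀ ≤ f z := by
    intro z
    by_cases hz : z ∈ Metric.closedBall (0:ℂ) R
    · exact isMinOn_iff.mp hminK z hz
    · have h1' : R < ‖z‖ := by
        simp only [Metric.mem_closedBall, Complex.dist_eq, sub_zero, not_le] at hz
        exact hz
      have h2 : R ^ ε < ‖z‖ ^ ε := Real.rpow_lt_rpow hRpos.le h1' hε0
      have h3 : R ^ ε = N X + f 0 + 1 := by
        rw [hR, ← Real.rpow_mul hB.le, inv_mul_cancel₀ hε0.ne', Real.rpow_one]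
      have h4 := hlow z
      have h5 : f z₀ ≤ f 0 := isMinOn_iff.mp hminK 0 (Metric.mem_closedBall_self hRpos.le)
      linarith
  rcases eq_or_lt_of_le (hpos (X - C z₀)) with hm0 | hm0
  · -- the minimum is zero: evaluation at z₀
    refine ⟨z₀, fun P => ?_⟩
    obtain ⟨Q, hQ⟩ := Polynomial.X_sub_C_dvd_sub_C_eval (a := z₀) (p := P)
    have hPeq : P = C (P.eval z₀) + (X - C z₀) * Q := by rw [← hQ]; ring
    have e1 : N ((X - C z₀) * Q) = 0 := by rw [hmul, ← hm0, zero_mul]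
    have le1 : N P ≤ ‖P.eval z₀‖ ^ ε := by
      calc N P = N (C (P.eval z₀) + (X - C z₀) * Q) := by rw [← hPeq]
        _ ≤ N (C (P.eval z₀)) + N ((X - C z₀) * Q) := hadd _ _
        _ = ‖P.eval z₀‖ ^ ε := by rw [hC, e1, add_zero]
    have le2 : ‖P.eval z₀‖ ^ ε ≤ N P := by
      have e2 : (C (P.eval z₀) : ℂ[X]) = P + (-((X - C z₀) * Q)) := by
        linear_combination -hQ
      calc ‖P.eval z₀‖ ^ ε = N (C (P.eval z₀)) := (hC _).symm
        _ = N (P + (-((X - C z₀) * Q))) := by rw [← e2]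
        _ ≤ N P + N (-((X - C z₀) * Q)) := hadd _ _
        _ = N P := by rw [hNneg, e1, add_zero]
    linarith
  · -- the minimum is positive: contradiction
    exfalso
    set m : ℝ := f z₀ with hmdef
    have hmpos : 0 < m := hm0
    have hNpow : ∀ (p : ℂ[X]) (n : ℕ), N (p ^ n) = N p ^ n := by
      intro p n
      induction n with
      | zero => simpa using h1
      | succ k ih => rw [pow_succ, pow_succ, hmul, ih]
    have hNprod : ∀ (s : Finset ℕ) (g : ℕ → ℂ[X]),
        N (∏ i ∈ s, g i) = ∏ i ∈ s, N (g i) :=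
      fun s g => map_prod (⟨⟨N, h1⟩, fun a b => hmul a b⟩ : ℂ[X] →* ℝ) g s
    have key : ∀ z₁ : ℂ, f z₁ = m → ∀ w : ℂ, ‖w‖ ^ ε < m → f (z₁ + w) = m := by
      intro z₁ hz₁ w hw
      set r : ℝ := ‖w‖ ^ ε with hr
      have hr0 : 0 ≤ r := Real.rpow_nonneg (norm_nonneg _) _
      have hrn : ∀ n : ℕ, (‖w‖ ^ n) ^ ε = r ^ n := by
        intro n
        rw [← Real.rpow_natCast (‖w‖) n, ← Real.rpow_mul (norm_nonneg _),
          mul_comm, Real.rpow_mul (norm_nonneg _), Real.rpow_natCast]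
      have hstep : ∀ k : ℕ, f (z₁ + w) * m ^ k ≤ m ^ (k+1) + r ^ (k+1) := by
        intro k
        set n := k + 1 with hndef
        have hn : 0 < n := k.succ_pos
        set ζ : ℂ := Complex.exp (2 * Real.pi * Complex.I / n) with hζdef
        have hζ : IsPrimitiveRoot ζ n := Complex.isPrimitiveRoot_exp n hn.ne'
        have hpoly : (X - C z₁ : ℂ[X]) ^ n - C (w ^ n) =
            ∏ i ∈ Finset.range n, (X - C (z₁ + ζ ^ i * w)) := by
          have h := X_pow_sub_C_eq_prod hζ hn (rfl : w ^ n = w ^ n)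
          have h2 := congrArg (Polynomial.aeval (X - C z₁ : ℂ[X])) h
          simpa [map_prod, sub_sub, C_add, C_mul, C_pow] using h2
        have hub : N ((X - C z₁ : ℂ[X]) ^ n - C (w ^ n)) ≤ m ^ n + r ^ n := by
          have e3 : ((X - C z₁ : ℂ[X]) ^ n - C (w ^ n)) = (X - C z₁)^n + (- C (w^n)) := by ring
          calc N ((X - C z₁ : ℂ[X]) ^ n - C (w ^ n))
              = N ((X - C z₁ : ℂ[X])^n + (- C (w^n))) := by rw [← e3]
            _ ≤ N ((X - C z₁ : ℂ[X])^n) + N (- C (w^n)) := hadd _ _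
            _ = m ^ n + r ^ n := by
                rw [hNpow, hNneg, hC, norm_pow, hrn]
                have : N (X - C z₁) = m := hz₁
                rw [this]
        have hlb : f (z₁ + w) * m ^ k ≤
            ∏ i ∈ Finset.range n, f (z₁ + ζ ^ i * w) := by
          rw [hndef, Finset.prod_range_succ']
          have hg0 : f (z₁ + ζ ^ 0 * w) = f (z₁ + w) := by norm_num
          rw [hg0, mul_comm]
          refine mul_le_mul_of_nonneg_right ?_ (hpos _)
          calc m ^ k = ∏ _i ∈ Finset.range k, m := by rw [Finset.prod_const, Finset.card_range]
            _ ≤ ∏ i ∈ Finset.range k, f (z₁ + ζ ^ (i+1) * w) :=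
                Finset.prod_le_prod (fun i _ => hmpos.le) (fun i _ => hz₀ _)
        calc f (z₁ + w) * m ^ k ≤ ∏ i ∈ Finset.range n, f (z₁ + ζ ^ i * w) := hlb
          _ = N ((X - C z₁ : ℂ[X]) ^ n - C (w ^ n)) := by rw [hpoly, hNprod]
          _ ≤ m ^ n + r ^ n := hub
      have hbd : ∀ k : ℕ, f (z₁ + w) ≤ m + r * (r / m) ^ k := by
        intro k
        have h5 := hstep k
        have hmk : (0:ℝ) < m ^ k := pow_pos hmpos k
        have h6 : f (z₁ + w) ≤ (m ^ (k+1) + r ^ (k+1)) / m ^ k := (le_div_iff₀ hmk).mpr h5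
        have h7 : (m ^ (k+1) + r ^ (k+1)) / m ^ k = m + r * (r / m) ^ k := by
          rw [div_eq_iff hmk.ne', add_mul, mul_assoc, ← mul_pow, div_mul_cancel₀ r hmpos.ne']
          ring
        rwa [h7] at h6
      have htend : Filter.Tendsto (fun k : ℕ => m + r * (r / m) ^ k)
          Filter.atTop (nhds m) := by
        have h6 : Filter.Tendsto (fun k : ℕ => ((r / m) ^ k : ℝ)) Filter.atTop (nhds 0) :=
          tendsto_pow_atTop_nhds_zero_of_lt_one (div_nonneg hr0 hmpos.le)
            ((div_lt_one hmpos).mpr hw)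
        have := (h6.const_mul r).const_add m
        simpa using this
      exact le_antisymm (ge_of_tendsto' htend hbd) (hz₀ _)
    -- the level set of the minimum is clopen, hence everything, contradiction
    set S : Set ℂ := {z | f z = m} with hSdef
    have hSopen : IsOpen S := by
      rw [Metric.isOpen_iff]
      intro z₁ hz₁
      refine ⟨m ^ ε⁻¹, Real.rpow_pos_of_pos hmpos _, fun y hy => ?_⟩
      have hw : ‖y - z₁‖ ^ ε < m := by
        have hy' : ‖y - z₁‖ < m ^ ε⁻¹ := by
          have := Metric.mem_ball.mp hy
          rwa [Complex.dist_eq] at this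
        have h8 := Real.rpow_lt_rpow (norm_nonneg _) hy' hε0
        rwa [← Real.rpow_mul hmpos.le, inv_mul_cancel₀ hε0.ne', Real.rpow_one] at h8
      have h9 := key z₁ hz₁ (y - z₁) hw
      show f y = m
      simpa using h9
    have hSclosed : IsClosed S := isClosed_eq hcont continuous_const
    have hSuniv : S = Set.univ := IsClopen.eq_univ ⟨hSclosed, hSopen⟩ ⟨z₀, rfl⟩
    set z : ℂ := (((m + N X + 1 : ℝ) ^ ε⁻¹ : ℝ) : ℂ) with hzdef
    have hzS : f z = m := by
      have : z ∈ S := hSuniv ▸ Set.mem_univ z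
      exact this
    have hBm : (0:ℝ) < m + N X + 1 := by have := hpos X; linarith
    have habsz : ‖z‖ = (m + N X + 1) ^ ε⁻¹ := by
      rw [hzdef, Complex.norm_real, Real.norm_eq_abs, abs_of_nonneg (Real.rpow_nonneg hBm.le _)]
    have h10 : ‖z‖ ^ ε = m + N X + 1 := by
      rw [habsz, ← Real.rpow_mul hBm.le, inv_mul_cancel₀ hε0.ne', Real.rpow_one]
    have h11 := hlow z
    rw [h10, hzS] at h11
    have := hpos X
    linarith
end

section
/- Let B be a commutative unital ℂ-algebra and let N be a multiplicative seminorm on B such that N(c·1) = |c|^ε for all c ∈ ℂ, for some fixed ε ∈ (0, 1]. Then there exists a ℂ-algebra homomorphism χ : B → ℂ such that N(f) = |χ(f)|^ε for all f ∈ B. -/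
open Polynomial Filter

private lemma aux_prod_ge (g : ℂ → ℝ) (m : ℝ) (hm : 0 ≤ m) :
    ∀ s : Multiset ℂ, (∀ z ∈ s, m ≤ g z) → m ^ Multiset.card s ≤ (s.map g).prod := by
  intro s
  induction s using Multiset.induction with
  | empty => simp
  | cons a s ih =>
    intro h
    simp only [Multiset.map_cons, Multiset.prod_cons, Multiset.card_cons, pow_succ]
    rw [mul_comm (m ^ Multiset.card s) m]
    exact mul_le_mul (h a (Multiset.mem_cons_self a s)) (ih fun z hz => h z (Multiset.mem_cons_of_mem hz))
      (pow_nonneg hm _) (le_trans hm (h a (Multiset.mem_cons_self a s)))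

private lemma disk_lemma {B : Type*} [CommRing B] [Algebra ℂ B] (ε : ℝ) (hε0 : 0 < ε)
    (N : B → ℝ) (h0 : ∀ a, 0 ≤ N a) (hone : N 1 = 1)
    (hmul : ∀ a b, N (a * b) = N a * N b) (hadd : ∀ a b, N (a + b) ≤ N a + N b)
    (hC : ∀ c : ℂ, N (algebraMap ℂ B c) = ‖c‖ ^ ε)
    (x : B) (m : ℝ) (hm : N x = m) (hmin : ∀ z : ℂ, m ≤ N (x - algebraMap ℂ B z))
    (w : ℂ) (hw : ‖w‖ ^ ε < m) :
    N (x - algebraMap ℂ B w) ≤ m := by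
  have hNmono : ∀ a b : B, N (a - b) ≤ N a + N b := by
    intro a b
    have hneg : N (-b) = N b := by
      have h1 : N (-1 : B) * N (-1 : B) = 1 := by
        rw [← hmul]; simp [hone]
      have h2 : N (-1 : B) = 1 := by
        nlinarith [h0 (-1 : B)]
      calc N (-b) = N ((-1) * b) := by ring_nf
        _ = N b := by rw [hmul, h2, one_mul]
    calc N (a - b) = N (a + (-b)) := by ring_nf
      _ ≤ N a + N (-b) := hadd _ _
      _ = N a + N b := by rw [hneg]
  have hs : ‖w‖ ^ ε ≥ 0 := Real.rpow_nonneg (norm_nonneg _) _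
  have hm0 : 0 < m := lt_of_le_of_lt hs hw
  set s : ℝ := ‖w‖ ^ ε with hs_def
  -- monoid hom version of N
  let M : B →* ℝ := ⟨⟨N, hone⟩, hmul⟩
  -- key inequality for each k
  have key : ∀ k : ℕ, N (x - algebraMap ℂ B w) * m ^ k ≤ m ^ (k+1) + s ^ (k+1) := by
    intro k
    set n : ℕ := k + 1 with hn
    have hn0 : n ≠ 0 := Nat.succ_ne_zero k
    set p : ℂ[X] := X ^ n - C (w ^ n) with hp
    have hmonic : p.Monic := monic_X_pow_sub_C _ hn0
    have hsplits : Splits p := IsAlgClosed.splits p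
    have hcard : Multiset.card p.roots = n := by
      rw [splits_iff_card_roots.mp hsplits, hp, natDegree_X_pow_sub_C]
    have hwroot : w ∈ p.roots := by
      rw [mem_roots hmonic.ne_zero]
      simp [hp, IsRoot]
    have hfact : p = (p.roots.map fun z => X - C z).prod :=
      hsplits.eq_prod_roots_of_monic hmonic
    -- evaluate at x
    have heval : aeval x p = x ^ n - algebraMap ℂ B (w ^ n) := by
      simp [hp]
    have heval2 : aeval x p = ((p.roots.map fun z => x - algebraMap ℂ B z)).prod := by
      conv_lhs => rw [hfact]
      rw [map_multiset_prod, Multiset.map_map]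
      congr 1
      apply Multiset.map_congr rfl
      intro z _
      simp
    -- N of product
    have hNprod : N (aeval x p) = ((p.roots.map fun z => N (x - algebraMap ℂ B z))).prod := by
      rw [heval2]
      have := map_multiset_prod M (p.roots.map fun z => x - algebraMap ℂ B z)
      rw [Multiset.map_map] at this
      exact this
    -- lower bound
    have hlow : N (x - algebraMap ℂ B w) * m ^ k ≤ N (aeval x p) := by
      rw [hNprod]
      have := Multiset.prod_map_erase (f := fun z => N (x - algebraMap ℂ B z)) hwroot
      rw [← this]
      have hcard_erase : Multiset.card (p.roots.erase w) = k := by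
        rw [Multiset.card_erase_of_mem hwroot, hcard]; rfl
      have hge : m ^ k ≤ ((p.roots.erase w).map fun z => N (x - algebraMap ℂ B z)).prod := by
        rw [← hcard_erase]
        exact aux_prod_ge _ m hm0.le _ fun z _ => hmin z
      exact mul_le_mul_of_nonneg_left hge (h0 _) |>.trans_eq rfl
    -- upper bound
    have hup : N (aeval x p) ≤ m ^ n + s ^ n := by
      rw [heval]
      have h1 : N (x ^ n - algebraMap ℂ B (w ^ n)) ≤ N (x ^ n) + N (algebraMap ℂ B (w ^ n)) :=
        hNmono _ _
      have h2 : N (x ^ n) = m ^ n := by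
        rw [← hm]
        induction n with
        | zero => simp [hone]
        | succ j ih => rw [pow_succ, pow_succ, hmul, ih]
      have h3 : N (algebraMap ℂ B (w ^ n)) = s ^ n := by
        rw [hC, norm_pow, hs_def, ← Real.rpow_natCast (‖w‖) n,
          ← Real.rpow_natCast (‖w‖ ^ ε) n, ← Real.rpow_mul (norm_nonneg _),
          ← Real.rpow_mul (norm_nonneg _), mul_comm]
      linarith
    exact hlow.trans hup
  -- take limit
  have hq : s / m < 1 := (div_lt_one hm0).mpr hw
  have hq0 : 0 ≤ s / m := div_nonneg hs hm0.le
  have hbound : ∀ k : ℕ, N (x - algebraMap ℂ B w) ≤ m + m * (s/m) ^ (k+1) := by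
    intro k
    have hk := key k
    have hmk : (0:ℝ) < m ^ k := pow_pos hm0 k
    rw [← le_div_iff₀ hmk] at hk
    calc N (x - algebraMap ℂ B w) ≤ (m ^ (k+1) + s ^ (k+1)) / m ^ k := hk
      _ = m + m * (s/m) ^ (k+1) := by
          field_simp
          have h1 : m * m⁻¹ = 1 := mul_inv_cancel₀ hm0.ne'
          have h2 : m ^ k * m⁻¹ ^ k = 1 := by rw [← mul_pow, h1, one_pow]
          linear_combination (-s * s ^ k * m ^ k * m⁻¹ ^ k) * h1 + (-s * s ^ k) * h2
  have htend : Tendsto (fun k : ℕ => m + m * (s/m) ^ (k+1)) atTop (nhds m) := by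
    have h1 : Tendsto (fun k : ℕ => (s/m) ^ (k+1)) atTop (nhds 0) := by
      have := tendsto_pow_atTop_nhds_zero_of_lt_one hq0 hq
      exact this.comp (tendsto_add_atTop_nat 1)
    have h2 : Tendsto (fun k : ℕ => m + m * (s/m) ^ (k+1)) atTop (nhds (m + m * 0)) :=
      (tendsto_const_nhds.add (tendsto_const_nhds.mul h1))
    simpa using h2
  exact ge_of_tendsto htend (Filter.Eventually.of_forall hbound)

private lemma aux_exists_root {B : Type*} [CommRing B] [Algebra ℂ B] (ε : ℝ) (hε0 : 0 < ε)
    (N : B → ℝ) (h0 : ∀ a, 0 ≤ N a) (hone : N 1 = 1)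
    (hmul : ∀ a b, N (a * b) = N a * N b) (hadd : ∀ a b, N (a + b) ≤ N a + N b)
    (hC : ∀ c : ℂ, N (algebraMap ℂ B c) = ‖c‖ ^ ε) (f : B) :
    ∃ c : ℂ, N (f - algebraMap ℂ B c) = 0 := by
  have hneg : ∀ a : B, N (-a) = N a := by
    intro a
    have h1 : N (-1 : B) * N (-1 : B) = 1 := by rw [← hmul]; simp [hone]
    have h2 : N (-1 : B) = 1 := by nlinarith [h0 (-1 : B)]
    calc N (-a) = N ((-1) * a) := by ring_nf
      _ = N a := by rw [hmul, h2, one_mul]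
  set φ : ℂ → ℝ := fun c => N (f - algebraMap ℂ B c) with hφ
  -- Lipschitz-type bound
  have hlip : ∀ c c' : ℂ, |φ c - φ c'| ≤ ‖c - c'‖ ^ ε := by
    intro c c'
    have key : ∀ a b : ℂ, φ a - φ b ≤ ‖a - b‖ ^ ε := by
      intro a b
      have heq : f - algebraMap ℂ B a = (f - algebraMap ℂ B b) + algebraMap ℂ B (b - a) := by
        rw [map_sub]; ring
      have := hadd (f - algebraMap ℂ B b) (algebraMap ℂ B (b - a))
      rw [← heq, hC] at this
      have habs : ‖b - a‖ = ‖a - b‖ := norm_sub_rev _ _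
      rw [habs] at this
      simpa [hφ] using by linarith
    rw [abs_sub_le_iff]
    refine ⟨key c c', ?_⟩
    have := key c' c
    rwa [show ‖c' - c‖ = ‖c - c'‖ from norm_sub_rev _ _] at this
  have hcont : Continuous φ := by
    rw [Metric.continuous_iff]
    intro c' e he
    refine ⟨e ^ ε⁻¹, Real.rpow_pos_of_pos he _, fun c hc => ?_⟩
    have h1 : dist (φ c) (φ c') ≤ ‖c - c'‖ ^ ε := by
      rw [Real.dist_eq]; exact hlip c c'
    have h2 : ‖c - c'‖ ^ ε < (e ^ ε⁻¹) ^ ε := by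
      apply Real.rpow_lt_rpow (norm_nonneg _) _ hε0
      rwa [← Complex.dist_eq]
    rw [Real.rpow_inv_rpow he.le hε0.ne'] at h2
    linarith
  -- lower bound for φ
  have hlb : ∀ c : ℂ, ‖c‖ ^ ε - N f ≤ φ c := by
    intro c
    have h1 : N (algebraMap ℂ B c) ≤ N (f - algebraMap ℂ B c) + N f := by
      have heq : algebraMap ℂ B c = (-(f - algebraMap ℂ B c)) + f := by ring
      calc N (algebraMap ℂ B c) = N ((-(f - algebraMap ℂ B c)) + f) := by rw [← heq]
        _ ≤ N (-(f - algebraMap ℂ B c)) + N f := hadd _ _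
        _ = N (f - algebraMap ℂ B c) + N f := by rw [hneg]
    rw [hC] at h1
    simp only [hφ]; linarith
  -- φ tends to atTop at cocompact
  have htop : Tendsto φ (cocompact ℂ) atTop := by
    apply tendsto_atTop_mono hlb
    apply tendsto_atTop_add_const_right
    have h1 : Tendsto (fun z : ℂ => ‖z‖) (cocompact ℂ) atTop := by
      have := tendsto_norm_cocompact_atTop (E := ℂ)
      exact this
    exact (tendsto_rpow_atTop hε0).comp h1
  obtain ⟨c₀, hc₀⟩ := hcont.exists_forall_le htop
  set m : ℝ := φ c₀ with hm_def
  by_contra hcon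
  push_neg at hcon
  have hm0 : 0 < m := lt_of_le_of_ne (h0 _) (Ne.symm (hcon c₀))
  -- the level set S = {c | φ c = m} is clopen
  set S : Set ℂ := {c | φ c = m} with hS
  have hSclosed : IsClosed S := isClosed_eq hcont continuous_const
  have hSopen : IsOpen S := by
    rw [Metric.isOpen_iff]
    intro c₁ hc₁
    refine ⟨m ^ ε⁻¹, Real.rpow_pos_of_pos hm0 _, fun c hc => ?_⟩
    -- c = c₁ + w with |w| < m^(1/ε)
    set w : ℂ := c - c₁ with hw_def
    have hwa : ‖w‖ ^ ε < m := by
      have h1 : ‖w‖ < m ^ ε⁻¹ := by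
        rw [hw_def, ← Complex.dist_eq]; exact Metric.mem_ball.mp hc
      calc ‖w‖ ^ ε < (m ^ ε⁻¹) ^ ε :=
            Real.rpow_lt_rpow (norm_nonneg _) h1 hε0
        _ = m := Real.rpow_inv_rpow hm0.le hε0.ne'
    have hkey : N ((f - algebraMap ℂ B c₁) - algebraMap ℂ B w) ≤ m := by
      apply disk_lemma ε hε0 N h0 hone hmul hadd hC (f - algebraMap ℂ B c₁) m hc₁ _ w hwa
      intro z
      have heq : f - algebraMap ℂ B c₁ - algebraMap ℂ B z = f - algebraMap ℂ B (c₁ + z) := by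
        rw [map_add]; ring
      rw [heq]
      exact hc₀ (c₁ + z)
    have heq2 : f - algebraMap ℂ B c₁ - algebraMap ℂ B w = f - algebraMap ℂ B c := by
      rw [hw_def, map_sub]; ring
    rw [heq2] at hkey
    exact le_antisymm hkey (hc₀ c)
  have hSuniv : S = Set.univ := IsClopen.eq_univ ⟨hSclosed, hSopen⟩ ⟨c₀, rfl⟩
  -- contradiction with unboundedness
  have hnn : (0:ℝ) ≤ m + N f + 1 := by have := h0 f; linarith
  set R : ℝ := (m + N f + 1) ^ ε⁻¹ with hR
  have hR0 : 0 ≤ R := Real.rpow_nonneg hnn _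
  have hcR : ‖(R : ℂ)‖ ^ ε = m + N f + 1 := by
    rw [Complex.norm_of_nonneg hR0, hR,
      Real.rpow_inv_rpow hnn hε0.ne']
  have h1 : m + 1 ≤ φ (R : ℂ) := by
    have := hlb (R : ℂ)
    rw [hcR] at this
    linarith
  have h2 : φ (R : ℂ) = m := by
    have : (R : ℂ) ∈ S := by rw [hSuniv]; trivial
    exact this
  linarith

/-- A multiplicative seminorm on a commutative unital `ℂ`-algebra restricting
to `|·|^ε` on `ℂ` comes from a `ℂ`-algebra homomorphism `χ : B → ℂ`. -/
theorem seminorm_comes_from_character (B : Type*) [CommRing B] [Algebra ℂ B]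
    (ε : ℝ) (hε0 : 0 < ε) (hε1 : ε ≤ 1)
    (N : B → ℝ) (hN : IsMultSeminorm N)
    (hC : ∀ c : ℂ, N (algebraMap ℂ B c) = ‖c‖ ^ ε) :
    ∃ χ : B →ₐ[ℂ] ℂ, ∀ f : B, N f = ‖χ f‖ ^ ε := by
  obtain ⟨h0, hzero, hone, hmul, hadd⟩ := hN
  have hneg : ∀ a : B, N (-a) = N a := by
    intro a
    have h1 : N (-1 : B) * N (-1 : B) = 1 := by rw [← hmul]; simp [hone]
    have h2 : N (-1 : B) = 1 := by nlinarith [h0 (-1 : B)]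
    calc N (-a) = N ((-1) * a) := by ring_nf
      _ = N a := by rw [hmul, h2, one_mul]
  have hex := aux_exists_root ε hε0 N h0 hone hmul hadd hC
  choose ch hch using hex
  have huniq : ∀ (f : B) (c : ℂ), N (f - algebraMap ℂ B c) = 0 → ch f = c := by
    intro f c hc
    have heq : algebraMap ℂ B (c - ch f)
        = (f - algebraMap ℂ B (ch f)) + (-(f - algebraMap ℂ B c)) := by
      rw [map_sub]; ring
    have h1 : N (algebraMap ℂ B (c - ch f)) ≤ 0 := by
      rw [heq]
      calc N ((f - algebraMap ℂ B (ch f)) + (-(f - algebraMap ℂ B c)))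
          ≤ N (f - algebraMap ℂ B (ch f)) + N (-(f - algebraMap ℂ B c)) := hadd _ _
        _ = 0 := by rw [hneg, hch, hc, add_zero]
    have h2 : ‖c - ch f‖ ^ ε = 0 := le_antisymm (by rwa [hC] at h1)
      (Real.rpow_nonneg (norm_nonneg _) _)
    have h3 : ‖c - ch f‖ = 0 :=
      (Real.rpow_eq_zero (norm_nonneg _) hε0.ne').mp h2
    exact (sub_eq_zero.mp (by simpa using h3)).symm
  have hmul_ch : ∀ x y : B, ch (x * y) = ch x * ch y := by
    intro x y
    apply huniq
    have heq : x * y - algebraMap ℂ B (ch x * ch y)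
        = (x - algebraMap ℂ B (ch x)) * y
          + algebraMap ℂ B (ch x) * (y - algebraMap ℂ B (ch y)) := by
      rw [map_mul]; ring
    apply le_antisymm _ (h0 _)
    rw [heq]
    calc N ((x - algebraMap ℂ B (ch x)) * y
          + algebraMap ℂ B (ch x) * (y - algebraMap ℂ B (ch y)))
        ≤ N ((x - algebraMap ℂ B (ch x)) * y)
          + N (algebraMap ℂ B (ch x) * (y - algebraMap ℂ B (ch y))) := hadd _ _
      _ = N (x - algebraMap ℂ B (ch x)) * N y
          + N (algebraMap ℂ B (ch x)) * N (y - algebraMap ℂ B (ch y)) := by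
          rw [hmul, hmul]
      _ = 0 := by rw [hch, hch]; ring
  have hadd_ch : ∀ x y : B, ch (x + y) = ch x + ch y := by
    intro x y
    apply huniq
    have heq : x + y - algebraMap ℂ B (ch x + ch y)
        = (x - algebraMap ℂ B (ch x)) + (y - algebraMap ℂ B (ch y)) := by
      rw [map_add]; ring
    apply le_antisymm _ (h0 _)
    rw [heq]
    calc N ((x - algebraMap ℂ B (ch x)) + (y - algebraMap ℂ B (ch y)))
        ≤ N (x - algebraMap ℂ B (ch x)) + N (y - algebraMap ℂ B (ch y)) := hadd _ _
      _ = 0 := by rw [hch, hch, add_zero]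
  have hcomm : ∀ c : ℂ, ch (algebraMap ℂ B c) = c := by
    intro c
    apply huniq
    rw [sub_self, hzero]
  refine ⟨{ toFun := ch,
            map_one' := by simpa using hcomm 1,
            map_mul' := hmul_ch,
            map_zero' := by simpa using hcomm 0,
            map_add' := hadd_ch,
            commutes' := hcomm }, ?_⟩
  intro f
  show N f = ‖ch f‖ ^ ε
  apply le_antisymm
  · have heq : f = (f - algebraMap ℂ B (ch f)) + algebraMap ℂ B (ch f) := by ring
    calc N f = N ((f - algebraMap ℂ B (ch f)) + algebraMap ℂ B (ch f)) := by rw [← heq]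
      _ ≤ N (f - algebraMap ℂ B (ch f)) + N (algebraMap ℂ B (ch f)) := hadd _ _
      _ = ‖ch f‖ ^ ε := by rw [hch, hC, zero_add]
  · have heq : algebraMap ℂ B (ch f) = (-(f - algebraMap ℂ B (ch f))) + f := by ring
    calc ‖ch f‖ ^ ε = N (algebraMap ℂ B (ch f)) := (hC _).symm
      _ = N ((-(f - algebraMap ℂ B (ch f))) + f) := by rw [← heq]
      _ ≤ N (-(f - algebraMap ℂ B (ch f))) + N f := hadd _ _
      _ = N f := by rw [hneg, hch, zero_add]
end
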